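/- arXiv:2002.00697 — 2 statements merged into one kernel-verified Lean document; each statement's English description precedes it below -/
import Mathlib

section
/- The bilinear bracket on gl_{n+}^ε is alternating and satisfies the Jacobi identity; consequently gl_{n+}^ε, with this bracket, is a Lie algebra over R. -/
abbrev GlIdx (n : ℕ) : Type := { p : Fin n × Fin n // p.1 ≠ p.2 } ⊕ (Fin n ⊕ Fin n)
abbrev Gl (n : ℕ) (R : Type*) [CommRing R] : Type _ := GlIdx n →₀ R

variable (n : ℕ) (R : Type*) [CommRing R] [Invertible (2 : R)] (ε : R)

noncomputable def xE (i j : Fin n) (h : i ≠ j) : Gl n R := Finsupp.single (Sum.inl ⟨(i, j), h⟩) 1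
noncomputable def aE (i : Fin n) : Gl n R := Finsupp.single (Sum.inr (Sum.inl i)) 1
noncomputable def bE (i : Fin n) : Gl n R := Finsupp.single (Sum.inr (Sum.inr i)) 1
noncomputable def xe (i j : Fin n) : Gl n R := if h : i ≠ j then xE n R i j h else 0
def lam (n : ℕ) (i j : Fin n) : ℕ := (j - i : Fin n).val

/-- The bracket of `gl_{n+}^ε` on basis elements. -/
noncomputable def bbE : GlIdx n → GlIdx n → Gl n R
  | Sum.inl ⟨(i, j), _⟩, Sum.inl ⟨(k, l), _⟩ =>
      if k = j ∧ l = i then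
        (⅟(2 : R)) • (bE n R i - bE n R j) + (ε * ⅟(2 : R)) • (aE n R i - aE n R j)
      else
        (if lam n i j + lam n k l < n then (1 : R) else ε) •
          ((if j = k then xe n R i l else 0) - (if l = i then xe n R k j else 0))
  | Sum.inr (Sum.inl i), Sum.inl ⟨(j, k), _⟩ =>
      (((if i = j then 1 else 0) : R) - ((if i = k then 1 else 0) : R)) • xe n R j k
  | Sum.inl ⟨(j, k), _⟩, Sum.inr (Sum.inl i) =>
      -((((if i = j then 1 else 0) : R) - ((if i = k then 1 else 0) : R)) • xe n R j k)
  | Sum.inr (Sum.inr i), Sum.inl ⟨(j, k), _⟩ =>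
      (ε * (((if i = j then 1 else 0) : R) - ((if i = k then 1 else 0) : R))) • xe n R j k
  | Sum.inl ⟨(j, k), _⟩, Sum.inr (Sum.inr i) =>
      -((ε * (((if i = j then 1 else 0) : R) - ((if i = k then 1 else 0) : R))) • xe n R j k)
  | _, _ => 0

/-- The bilinear bracket of `gl_{n+}^ε`. -/
noncomputable def brE : Gl n R →ₗ[R] Gl n R →ₗ[R] Gl n R :=
  Finsupp.lift (Gl n R →ₗ[R] Gl n R) R (GlIdx n) fun s =>
    Finsupp.lift (Gl n R) R (GlIdx n) fun t => bbE n R ε s t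


namespace Stmt15Aux
set_option linter.unusedSectionVars false

open Polynomial Matrix
attribute [local instance] LieRing.ofAssociativeRing

variable (n : ℕ) (R : Type*) [CommRing R] (ε : R)

lemma pA_monic (hn : 1 ≤ n) : (X ^ (n + 1) - C ε * X : R[X]).Monic := by
  apply Polynomial.monic_X_pow_sub
  have h1 : (C ε * X : R[X]).degree ≤ 1 := by
    refine le_trans (degree_mul_le _ _) ?_
    calc degree (C ε) + degree (X : R[X]) ≤ 0 + 1 :=
          add_le_add (degree_C_le) (degree_X_le)
      _ = 1 := by norm_num
  refine lt_of_le_of_lt h1 ?_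
  have h2 : (1 : ℕ) < n + 1 := by omega
  exact_mod_cast h2

lemma pA_natDegree [Nontrivial R] (hn : 1 ≤ n) :
    (X ^ (n + 1) - C ε * X : R[X]).natDegree = n + 1 := by
  rw [Polynomial.natDegree_sub_eq_left_of_natDegree_lt, natDegree_X_pow]
  rw [natDegree_X_pow]
  calc (C ε * X).natDegree ≤ 1 := by
        apply le_trans (natDegree_mul_le)
        simp
    _ < n + 1 := by omega

noncomputable abbrev Aq : Type _ := AdjoinRoot (X ^ (n + 1) - C ε * X : R[X])

noncomputable def tA : Aq n R ε := AdjoinRoot.root _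

lemma tA_pow_succ : (tA n R ε) ^ (n + 1) = ε • (tA n R ε) := by
  have h := AdjoinRoot.eval₂_root (X ^ (n + 1) - C ε * X : R[X])
  simp only [eval₂_sub, eval₂_pow, eval₂_mul, eval₂_C, eval₂_X, sub_eq_zero] at h
  rw [tA, h, Algebra.smul_def, AdjoinRoot.algebraMap_eq]

lemma tA_pow_add (r : ℕ) (hr : 1 ≤ r) : (tA n R ε) ^ (n + r) = ε • (tA n R ε) ^ r := by
  obtain ⟨m, rfl⟩ : ∃ m, r = m + 1 := ⟨r - 1, by omega⟩
  have : n + (m + 1) = (n + 1) + m := by omega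
  rw [this, pow_add, tA_pow_succ, smul_mul_assoc, ← pow_succ']



lemma lam_lt {n : ℕ} (i j : Fin n) : lam n i j < n := (j - i).isLt

lemma lam_pos {n : ℕ} {i j : Fin n} (h : i ≠ j) : 1 ≤ lam n i j := by
  haveI : NeZero n := ⟨by have := i.pos; omega⟩
  rcases Nat.eq_zero_or_pos (lam n i j) with h0 | h1
  · exact absurd (sub_eq_zero.mp (Fin.ext h0 : (j - i : Fin n) = 0)).symm h
  · exact h1

lemma lam_mod {n : ℕ} (i j l : Fin n) : (lam n i j + lam n j l) % n = lam n i l := by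
  haveI : NeZero n := ⟨by have := i.pos; omega⟩
  have h : (l - j : Fin n) + (j - i) = l - i := sub_add_sub_cancel l j i
  have h2 := congrArg Fin.val h
  rw [Fin.val_add] at h2
  rw [lam, lam, lam, Nat.add_comm]
  exact h2

lemma lam_add_lam {n : ℕ} {i j : Fin n} (h : i ≠ j) : lam n i j + lam n j i = n := by
  have hm := lam_mod i j i
  haveI : NeZero n := ⟨by have := i.pos; omega⟩
  have h0 : lam n i i = 0 := by rw [lam, sub_self]; rfl
  have h1 := lam_pos h
  have h2 := lam_pos (Ne.symm h)
  have h3 := lam_lt i j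
  have h4 := lam_lt j i
  rw [h0] at hm
  obtain ⟨k, hk⟩ := Nat.dvd_of_mod_eq_zero hm
  rcases k with _ | _ | k
  · omega
  · omega
  · have : n * (k + 1 + 1) ≥ n * 2 := Nat.mul_le_mul_left n (by omega)
    omega

lemma lam_eq_of_lt {n : ℕ} {i j l : Fin n} (h : lam n i j + lam n j l < n) :
    lam n i j + lam n j l = lam n i l := by
  have hm := lam_mod i j l
  rwa [Nat.mod_eq_of_lt h] at hm

lemma lam_eq_of_ge {n : ℕ} {i j l : Fin n} (h : n ≤ lam n i j + lam n j l) :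
    lam n i j + lam n j l = lam n i l + n := by
  have hm := lam_mod i j l
  have h3 := lam_lt i j
  have h4 := lam_lt j l
  rw [Nat.mod_eq_sub_mod h, Nat.mod_eq_of_lt (by omega)] at hm
  omega


variable [Invertible (2 : R)]

noncomputable def uA : Aq n R ε := (2 : R) • (tA n R ε) ^ n - algebraMap R (Aq n R ε) ε

lemma uA_mul_pow (r : ℕ) (hr : 1 ≤ r) :
    uA n R ε * (tA n R ε) ^ r = ε • (tA n R ε) ^ r := by
  rw [uA, sub_mul, smul_mul_assoc, ← pow_add, tA_pow_add n R ε r hr, smul_smul,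
    ← Algebra.smul_def, ← sub_smul]
  congr 1
  ring

lemma half_uA : (⅟(2:R)) • uA n R ε + (ε * ⅟(2:R)) • (1 : Aq n R ε) = (tA n R ε) ^ n := by
  rw [uA, smul_sub, smul_smul, invOf_mul_self, one_smul, Algebra.algebraMap_eq_smul_one,
    smul_smul, mul_comm (⅟(2:R)) ε, sub_add_cancel]

noncomputable abbrev Mn : Type _ := Matrix (Fin n) (Fin n) (Aq n R ε)

noncomputable def vB : GlIdx n → Mn n R ε
  | Sum.inl p => Matrix.single p.1.1 p.1.2 ((tA n R ε) ^ lam n p.1.1 p.1.2)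
  | Sum.inr (Sum.inl i) => Matrix.single i i 1
  | Sum.inr (Sum.inr i) => Matrix.single i i (uA n R ε)

@[simp] lemma vB_x (i j : Fin n) (h : i ≠ j) :
    vB n R ε (Sum.inl ⟨(i, j), h⟩) = Matrix.single i j ((tA n R ε) ^ lam n i j) := rfl
@[simp] lemma vB_a (i : Fin n) : vB n R ε (Sum.inr (Sum.inl i)) = Matrix.single i i 1 := rfl
@[simp] lemma vB_b (i : Fin n) :
    vB n R ε (Sum.inr (Sum.inr i)) = Matrix.single i i (uA n R ε) := rfl

noncomputable def Phi : Gl n R →ₗ[R] Mn n R ε :=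
  Finsupp.lift (Mn n R ε) R (GlIdx n) (vB n R ε)

lemma Phi_single (s : GlIdx n) (r : R) :
    Phi n R ε (Finsupp.single s r) = r • vB n R ε s := by
  simp [Phi, Finsupp.lift_apply, Finsupp.sum_single_index]

lemma Phi_xE (i j : Fin n) (h : i ≠ j) :
    Phi n R ε (xE n R i j h) = Matrix.single i j ((tA n R ε) ^ lam n i j) := by
  rw [xE, Phi_single, one_smul, vB_x]

lemma Phi_xe (i j : Fin n) (h : i ≠ j) :
    Phi n R ε (xe n R i j) = Matrix.single i j ((tA n R ε) ^ lam n i j) := by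
  rw [xe, dif_pos h, Phi_xE]

lemma Phi_aE (i : Fin n) : Phi n R ε (aE n R i) = Matrix.single i i 1 := by
  rw [aE, Phi_single, one_smul, vB_a]

lemma Phi_bE (i : Fin n) : Phi n R ε (bE n R i) = Matrix.single i i (uA n R ε) := by
  rw [bE, Phi_single, one_smul, vB_b]

lemma lie_E (i j k l : Fin n) (a b : Aq n R ε) :
    ⁅(Matrix.single i j a : Mn n R ε), Matrix.single k l b⁆
      = (if j = k then Matrix.single i l (a * b) else 0)
        - (if l = i then Matrix.single k j (b * a) else 0) := by
  rw [Ring.lie_def]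
  by_cases h1 : j = k <;> by_cases h2 : l = i <;>
    simp [h1, h2, Matrix.single_mul_single_same, Matrix.single_mul_single_of_ne]

lemma lie_diag (i j : Fin n) (c d : Aq n R ε) :
    ⁅(Matrix.single i i c : Mn n R ε), Matrix.single j j d⁆ = 0 := by
  rw [lie_E]
  by_cases h : i = j
  · subst h; rw [if_pos rfl, if_pos rfl, mul_comm d c, sub_self]
  · rw [if_neg h, if_neg (fun hh => h hh.symm), sub_zero]

lemma hom_ax (i j k : Fin n) (hjk : j ≠ k) :
    Phi n R ε ((((if i = j then 1 else 0) : R) - ((if i = k then 1 else 0) : R)) • xe n R j k)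
      = ⁅(Matrix.single i i (1 : Aq n R ε) : Mn n R ε),
          Matrix.single j k ((tA n R ε) ^ lam n j k)⁆ := by
  rw [lie_E, _root_.map_smul, Phi_xe n R ε j k hjk]
  by_cases hij : i = j
  · subst hij
    rw [if_pos rfl, if_pos rfl, if_neg hjk, if_neg (fun hh => hjk hh.symm), sub_zero, sub_zero,
      one_mul, one_smul]
  · rw [if_neg hij, if_neg hij, zero_sub, zero_sub]
    by_cases hik : i = k
    · subst hik
      rw [if_pos rfl, if_pos rfl, mul_one, neg_smul, one_smul]
    · rw [if_neg hik, if_neg (fun hh => hik hh.symm)]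
      simp

lemma hom_bx (i j k : Fin n) (hjk : j ≠ k) :
    Phi n R ε ((ε * ((((if i = j then 1 else 0) : R) - ((if i = k then 1 else 0) : R)))) • xe n R j k)
      = ⁅(Matrix.single i i (uA n R ε) : Mn n R ε),
          Matrix.single j k ((tA n R ε) ^ lam n j k)⁆ := by
  rw [lie_E, _root_.map_smul, Phi_xe n R ε j k hjk]
  by_cases hij : i = j
  · subst hij
    rw [if_pos rfl, if_pos rfl, if_neg hjk, if_neg (fun hh => hjk hh.symm), sub_zero, sub_zero,
      uA_mul_pow n R ε _ (lam_pos hjk), ← Matrix.smul_single, mul_one]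
  · rw [if_neg hij, if_neg hij, zero_sub, zero_sub]
    by_cases hik : i = k
    · subst hik
      rw [if_pos rfl, if_pos rfl, mul_comm ((tA n R ε) ^ lam n j i) (uA n R ε),
        uA_mul_pow n R ε _ (lam_pos hjk), ← Matrix.smul_single,
        show (ε * (-(1:R))) = -ε by ring, neg_smul]
    · rw [if_neg hik, if_neg (fun hh => hik hh.symm)]
      simp

lemma hom_xx (i j k l : Fin n) (hij : i ≠ j) (hkl : k ≠ l) :
    Phi n R ε (bbE n R ε (Sum.inl ⟨(i, j), hij⟩) (Sum.inl ⟨(k, l), hkl⟩))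
      = ⁅vB n R ε (Sum.inl ⟨(i, j), hij⟩), vB n R ε (Sum.inl ⟨(k, l), hkl⟩)⁆ := by
  rw [vB_x, vB_x, lie_E]
  by_cases hc : k = j ∧ l = i
  · obtain ⟨rfl, rfl⟩ := hc
    rw [show bbE n R ε (Sum.inl ⟨(l, k), hij⟩) (Sum.inl ⟨(k, l), hkl⟩)
        = (⅟(2 : R)) • (bE n R l - bE n R k) + (ε * ⅟(2 : R)) • (aE n R l - aE n R k) by
      simp [bbE]]
    rw [map_add, _root_.map_smul, _root_.map_smul, map_sub, map_sub, Phi_bE, Phi_bE,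
      Phi_aE, Phi_aE]
    rw [if_pos rfl, if_pos rfl, ← pow_add, ← pow_add, lam_add_lam hij,
      lam_add_lam hkl]
    have key : ∀ m : Fin n,
        (⅟(2:R)) • (Matrix.single m m (uA n R ε) : Mn n R ε)
          + (ε * ⅟(2:R)) • Matrix.single m m (1 : Aq n R ε)
          = Matrix.single m m ((tA n R ε) ^ n) := fun m => by
      rw [Matrix.smul_single, Matrix.smul_single, ← Matrix.single_add, half_uA]
    rw [smul_sub, smul_sub, ← key l, ← key k]
    abel
  · rw [show bbE n R ε (Sum.inl ⟨(i, j), hij⟩) (Sum.inl ⟨(k, l), hkl⟩)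
        = (if lam n i j + lam n k l < n then (1 : R) else ε) •
            ((if j = k then xe n R i l else 0) - (if l = i then xe n R k j else 0)) by
      simp [bbE, hc]]
    rw [_root_.map_smul, map_sub]
    by_cases hjk : j = k
    · subst hjk
      have hli : l ≠ i := fun h => hc ⟨rfl, h⟩
      have hil : i ≠ l := fun h => hli h.symm
      rw [if_pos rfl, if_pos rfl, if_neg hli, if_neg hli, map_zero, sub_zero, sub_zero,
        Phi_xe n R ε i l hil, ← pow_add]
      by_cases hlt : lam n i j + lam n j l < n
      · rw [if_pos hlt, lam_eq_of_lt hlt, one_smul]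
      · rw [if_neg hlt, lam_eq_of_ge (le_of_not_gt hlt),
          Nat.add_comm (lam n i l) n, tA_pow_add n R ε _ (lam_pos hil),
          ← Matrix.smul_single]
    · rw [if_neg hjk, if_neg hjk, map_zero, zero_sub, zero_sub, smul_neg]
      by_cases hli : l = i
      · subst hli
        have hkj : k ≠ j := fun h => hjk h.symm
        rw [if_pos rfl, if_pos rfl, Phi_xe n R ε k j hkj, ← pow_add]
        by_cases hlt : lam n l j + lam n k l < n
        · rw [if_pos hlt, one_smul, lam_eq_of_lt (show lam n k l + lam n l j < n by omega)]
        · rw [if_neg hlt, lam_eq_of_ge (show n ≤ lam n k l + lam n l j by omega),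
            Nat.add_comm (lam n k j) n, tA_pow_add n R ε _ (lam_pos hkj),
            ← Matrix.smul_single]
      · simp [hli]

lemma hom_basis (s t : GlIdx n) :
    Phi n R ε (bbE n R ε s t) = ⁅vB n R ε s, vB n R ε t⁆ := by
  obtain (⟨⟨i, j⟩, hij⟩ | i | i) := s <;> obtain (⟨⟨k, l⟩, hkl⟩ | k | k) := t
  · exact hom_xx n R ε i j k l hij hkl
  · rw [show bbE n R ε (Sum.inl ⟨(i, j), hij⟩) (Sum.inr (Sum.inl k))
        = -((((if k = i then 1 else 0) : R) - ((if k = j then 1 else 0) : R)) • xe n R i j)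
        from rfl, map_neg, ← lie_skew, vB_a, vB_x]
    exact congrArg Neg.neg (hom_ax n R ε k i j hij)
  · rw [show bbE n R ε (Sum.inl ⟨(i, j), hij⟩) (Sum.inr (Sum.inr k))
        = -((ε * ((((if k = i then 1 else 0) : R) - ((if k = j then 1 else 0) : R)))) • xe n R i j)
        from rfl, map_neg, ← lie_skew, vB_b, vB_x]
    exact congrArg Neg.neg (hom_bx n R ε k i j hij)
  · rw [show bbE n R ε (Sum.inr (Sum.inl i)) (Sum.inl ⟨(k, l), hkl⟩)
        = (((if i = k then 1 else 0) : R) - ((if i = l then 1 else 0) : R)) • xe n R k l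
        from rfl, vB_a, vB_x]
    exact hom_ax n R ε i k l hkl
  · rw [show bbE n R ε (Sum.inr (Sum.inl i)) (Sum.inr (Sum.inl k)) = 0 from rfl, map_zero,
      vB_a, vB_a, lie_diag]
  · rw [show bbE n R ε (Sum.inr (Sum.inl i)) (Sum.inr (Sum.inr k)) = 0 from rfl, map_zero,
      vB_a, vB_b, lie_diag]
  · rw [show bbE n R ε (Sum.inr (Sum.inr i)) (Sum.inl ⟨(k, l), hkl⟩)
        = (ε * ((((if i = k then 1 else 0) : R) - ((if i = l then 1 else 0) : R)))) • xe n R k l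
        from rfl, vB_b, vB_x]
    exact hom_bx n R ε i k l hkl
  · rw [show bbE n R ε (Sum.inr (Sum.inr i)) (Sum.inr (Sum.inl k)) = 0 from rfl, map_zero,
      vB_b, vB_a, lie_diag]
  · rw [show bbE n R ε (Sum.inr (Sum.inr i)) (Sum.inr (Sum.inr k)) = 0 from rfl, map_zero,
      vB_b, vB_b, lie_diag]

lemma brE_single (s t : GlIdx n) (r q : R) :
    brE n R ε (Finsupp.single s r) (Finsupp.single t q) = r • q • bbE n R ε s t := by
  simp [brE, Finsupp.lift_apply, Finsupp.sum_single_index]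

lemma Phi_brE (u v : Gl n R) :
    Phi n R ε (brE n R ε u v) = ⁅Phi n R ε u, Phi n R ε v⁆ := by
  induction u using Finsupp.induction_linear with
  | zero => simp
  | add f g hf hg => simp [map_add, LinearMap.add_apply, hf, hg, add_lie]
  | single s r =>
    induction v using Finsupp.induction_linear with
    | zero => simp
    | add f g hf hg => simp [map_add, hf, hg, lie_add]
    | single t q =>
      rw [brE_single, _root_.map_smul, _root_.map_smul, Phi_single, Phi_single, hom_basis]
      simp only [Ring.lie_def, smul_sub, smul_mul_assoc, mul_smul_comm, smul_smul, mul_comm q r]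

section Inj

variable [Nontrivial R]

noncomputable def pb (hn : 1 ≤ n) : PowerBasis R (Aq n R ε) :=
  AdjoinRoot.powerBasis' (pA_monic n R ε hn)

lemma pb_dim (hn : 1 ≤ n) : (pb n R ε hn).dim = n + 1 := by
  rw [pb, AdjoinRoot.powerBasis'_dim, pA_natDegree n R ε hn]

noncomputable def coordA (hn : 1 ≤ n) (k : ℕ) (hk : k ≤ n) : Aq n R ε →ₗ[R] R :=
  (pb n R ε hn).basis.coord ⟨k, by rw [pb_dim n R ε hn]; omega⟩

lemma coordA_pow (hn : 1 ≤ n) (k m : ℕ) (hk : k ≤ n) (hm : m ≤ n) :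
    coordA n R ε hn k hk ((tA n R ε) ^ m) = if k = m then 1 else 0 := by
  have hgen : (pb n R ε hn).gen = tA n R ε := by rw [pb, AdjoinRoot.powerBasis'_gen]; rfl
  have hbasis : (pb n R ε hn).basis ⟨m, by rw [pb_dim n R ε hn]; omega⟩ = (tA n R ε) ^ m := by
    rw [PowerBasis.coe_basis, hgen]
  rw [← hbasis, coordA, Module.Basis.coord_apply, Module.Basis.repr_self, Finsupp.single_apply]
  by_cases h : k = m
  · subst h; rw [if_pos rfl, if_pos rfl]
  · rw [if_neg (by simp only [Fin.mk.injEq]; omega), if_neg h]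

lemma coordA_one (hn : 1 ≤ n) (k : ℕ) (hk : k ≤ n) :
    coordA n R ε hn k hk (1 : Aq n R ε) = if k = 0 then 1 else 0 := by
  have h := coordA_pow n R ε hn k 0 hk (by omega)
  rwa [pow_zero] at h

lemma coordA_uA (hn : 1 ≤ n) (k : ℕ) (hk : k ≤ n) :
    coordA n R ε hn k hk (uA n R ε)
      = 2 * (if k = n then 1 else 0) - ε * (if k = 0 then 1 else 0) := by
  rw [uA, Algebra.algebraMap_eq_smul_one, map_sub, _root_.map_smul, _root_.map_smul,
    coordA_pow n R ε hn k n hk (le_refl n), coordA_one n R ε hn k hk, smul_eq_mul, smul_eq_mul]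

noncomputable def entryL (i j : Fin n) : Mn n R ε →ₗ[R] Aq n R ε where
  toFun m := m i j
  map_add' _ _ := rfl
  map_smul' _ _ := rfl

lemma entry_same (i j : Fin n) (c : Aq n R ε) :
    (Matrix.single i j c : Mn n R ε) i j = c :=
  Matrix.single_apply_same i j c

lemma entry_ne {i j k l : Fin n} (c : Aq n R ε) (h : ¬(i = k ∧ j = l)) :
    (Matrix.single i j c : Mn n R ε) k l = 0 :=
  Matrix.single_apply_of_ne i j c k l h

lemma entryL_apply (i j : Fin n) (m : Mn n R ε) : entryL n R ε i j m = m i j := rfl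

noncomputable def psiC (hn : 2 ≤ n) : GlIdx n → (Mn n R ε →ₗ[R] R)
  | Sum.inl p =>
      (coordA n R ε (by omega) (lam n p.1.1 p.1.2) (Nat.le_of_lt (lam_lt p.1.1 p.1.2))).comp
        (entryL n R ε p.1.1 p.1.2)
  | Sum.inr (Sum.inl i) =>
      (coordA n R ε (by omega) 0 (by omega)).comp (entryL n R ε i i)
        + (ε * ⅟(2:R)) • ((coordA n R ε (by omega) n (le_refl n)).comp (entryL n R ε i i))
  | Sum.inr (Sum.inr i) =>
      (⅟(2:R)) • ((coordA n R ε (by omega) n (le_refl n)).comp (entryL n R ε i i))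

noncomputable def psi (hn : 2 ≤ n) : Mn n R ε →ₗ[R] Gl n R :=
  (Finsupp.linearEquivFunOnFinite R R (GlIdx n)).symm.toLinearMap.comp
    (LinearMap.pi (psiC n R ε hn))

lemma psi_apply (hn : 2 ≤ n) (m : Mn n R ε) (s : GlIdx n) :
    psi n R ε hn m s = psiC n R ε hn s m := rfl

lemma psi_comp_phi (hn : 2 ≤ n) (s : GlIdx n) :
    psi n R ε hn (vB n R ε s) = Finsupp.single s (1 : R) := by
  have h1 : (1:ℕ) ≤ n := by omega
  ext s'
  rw [psi_apply]
  obtain (⟨⟨i, j⟩, hij⟩ | i | i) := s <;> obtain (⟨⟨k, l⟩, hkl⟩ | k | k) := s' <;>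
    simp only [psiC, vB_x, vB_a, vB_b, LinearMap.coe_comp, Function.comp_apply,
      LinearMap.add_apply, LinearMap.smul_apply, smul_eq_mul, entryL_apply,
      LinearMap.coe_mk, AddHom.coe_mk, Finsupp.single_apply]
  · by_cases h : i = k ∧ j = l
    · obtain ⟨rfl, rfl⟩ := h
      rw [entry_same, coordA_pow n R ε (by omega) _ _ (Nat.le_of_lt (lam_lt i j))
          (Nat.le_of_lt (lam_lt i j)), if_pos rfl, if_pos rfl]
    · rw [entry_ne n R ε _ h, map_zero,
        if_neg (by simp only [Sum.inl.injEq, Subtype.mk.injEq, Prod.mk.injEq]; tauto)]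
  · rw [entry_ne n R ε _ (fun hh : i = k ∧ j = k => hij (hh.1.trans hh.2.symm))]
    simp
  · rw [entry_ne n R ε _ (fun hh : i = k ∧ j = k => hij (hh.1.trans hh.2.symm)), map_zero,
      mul_zero, if_neg (by simp)]
  · rw [entry_ne n R ε _ (fun hh : i = k ∧ i = l => hkl (hh.1.symm.trans hh.2)), map_zero,
      if_neg (by simp)]
  · by_cases h : i = k
    · subst h
      rw [entry_same, coordA_one n R ε (by omega) 0 (by omega),
        coordA_one n R ε (by omega) n (le_refl n), if_pos rfl, if_neg (by omega), mul_zero,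
        add_zero, if_pos rfl]
    · rw [entry_ne n R ε _ (by tauto)]
      simp [h]
  · by_cases h : i = k
    · subst h
      rw [entry_same, coordA_one n R ε (by omega) n (le_refl n), if_neg (by omega), mul_zero,
        if_neg (by simp)]
    · rw [entry_ne n R ε _ (by tauto), map_zero, mul_zero, if_neg (by simp)]
  · rw [entry_ne n R ε _ (fun hh : i = k ∧ i = l => hkl (hh.1.symm.trans hh.2)), map_zero,
      if_neg (by simp)]
  · by_cases h : i = k
    · subst h
      rw [entry_same, coordA_uA n R ε (by omega) 0 (by omega),
        coordA_uA n R ε (by omega) n (le_refl n), if_pos rfl, if_pos rfl,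
        if_neg (by omega), if_neg (by omega), if_neg (by simp)]
      linear_combination ε * (invOf_mul_self (2:R))
    · rw [entry_ne n R ε _ (by tauto)]
      simp [h]
  · by_cases h : i = k
    · subst h
      rw [entry_same, coordA_uA n R ε (by omega) n (le_refl n), if_pos rfl,
        if_neg (by omega), mul_zero, sub_zero, if_pos rfl]
      linear_combination invOf_mul_self (2:R)
    · rw [entry_ne n R ε _ (by tauto), map_zero, mul_zero, if_neg (by simp [h])]

end Inj

lemma phi_inj [Nontrivial R] (hn : 2 ≤ n) : Function.Injective (Phi n R ε) := by
  have hcomp : (psi n R ε hn).comp (Phi n R ε) = LinearMap.id := by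
    apply Finsupp.lhom_ext
    intro a b
    rw [LinearMap.comp_apply, Phi_single, _root_.map_smul, psi_comp_phi n R ε hn a,
      LinearMap.id_apply, Finsupp.smul_single, smul_eq_mul, mul_one]
  intro u v h
  have h2 := congrArg (psi n R ε hn) h
  rwa [← LinearMap.comp_apply, ← LinearMap.comp_apply, hcomp, LinearMap.id_apply,
    LinearMap.id_apply] at h2

lemma jac3 {L : Type*} [LieRing L] (x y z : L) :
    ⁅⁅x, y⁆, z⁆ + ⁅⁅y, z⁆, x⁆ + ⁅⁅z, x⁆, y⁆ = 0 := by
  rw [← lie_skew ⁅x, y⁆ z, ← lie_skew ⁅y, z⁆ x, ← lie_skew ⁅z, x⁆ y]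
  have h := lie_jacobi x y z
  calc -⁅z, ⁅x, y⁆⁆ + -⁅x, ⁅y, z⁆⁆ + -⁅y, ⁅z, x⁆⁆
      = -(⁅x, ⁅y, z⁆⁆ + ⁅y, ⁅z, x⁆⁆ + ⁅z, ⁅x, y⁆⁆) := by abel
    _ = 0 := by rw [h, neg_zero]

end Stmt15Aux

/-- the bilinear bracket of `gl_{n+}^ε` is alternating and satisfies the
Jacobi identity; consequently `gl_{n+}^ε`, with this bracket, is a Lie algebra over `R`. -/
theorem stmt15 (n : ℕ) (hn : 2 ≤ n) (R : Type*) [CommRing R] [Invertible (2 : R)] (ε : R) :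
    (∀ u : Gl n R, brE n R ε u u = 0) ∧
    (∀ u v w : Gl n R,
      brE n R ε (brE n R ε u v) w + brE n R ε (brE n R ε v w) u
        + brE n R ε (brE n R ε w u) v = 0) ∧
    ∃ inst : LieRing (Gl n R),
      inst.toAddCommGroup = (inferInstance : AddCommGroup (Gl n R)) ∧
      ∀ u v : Gl n R, @Bracket.bracket _ _ inst.toBracket u v = brE n R ε u v := by
  letI : LieRing (Stmt15Aux.Mn n R ε) := LieRing.ofAssociativeRing
  have key1 : ∀ u : Gl n R, brE n R ε u u = 0 := by
    rcases subsingleton_or_nontrivial R with hR | hR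
    · haveI := Module.subsingleton R (Gl n R)
      intro u; exact Subsingleton.elim _ _
    · intro u
      apply Stmt15Aux.phi_inj n R ε hn
      rw [Stmt15Aux.Phi_brE, lie_self, map_zero]
  have key2 : ∀ u v w : Gl n R,
      brE n R ε (brE n R ε u v) w + brE n R ε (brE n R ε v w) u
        + brE n R ε (brE n R ε w u) v = 0 := by
    rcases subsingleton_or_nontrivial R with hR | hR
    · haveI := Module.subsingleton R (Gl n R)
      intro u v w; exact Subsingleton.elim _ _
    · intro u v w
      apply Stmt15Aux.phi_inj n R ε hn
      simp only [map_add, Stmt15Aux.Phi_brE, map_zero]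
      exact Stmt15Aux.jac3 _ _ _
  have skew : ∀ a b : Gl n R, brE n R ε a b = -(brE n R ε b a) := by
    intro a b
    have h := key1 (a + b)
    rw [map_add (brE n R ε) a b, LinearMap.add_apply, map_add, map_add, key1 a, key1 b,
      zero_add, add_zero] at h
    exact eq_neg_of_add_eq_zero_left h
  have hadd : ∀ x y z : Gl n R, brE n R ε (x + y) z = brE n R ε x z + brE n R ε y z := by
    intro x y z
    rw [map_add (brE n R ε) x y, LinearMap.add_apply]
  have hlieadd : ∀ x y z : Gl n R, brE n R ε x (y + z) = brE n R ε x y + brE n R ε x z :=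
    fun x y z => map_add (brE n R ε x) y z
  have hleib : ∀ x y z : Gl n R,
      brE n R ε x (brE n R ε y z)
        = brE n R ε (brE n R ε x y) z + brE n R ε y (brE n R ε x z) := by
    intro x y z
    have h2 := key2 x y z
    rw [skew (brE n R ε y z) x] at h2
    have h3 : brE n R ε y (brE n R ε x z) = brE n R ε (brE n R ε z x) y := by
      rw [skew x z, map_neg, skew y (brE n R ε z x), neg_neg]
    rw [h3]
    have h4 : brE n R ε x (brE n R ε y z)
        - (brE n R ε (brE n R ε x y) z + brE n R ε (brE n R ε z x) y) = 0 := by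
      calc brE n R ε x (brE n R ε y z)
            - (brE n R ε (brE n R ε x y) z + brE n R ε (brE n R ε z x) y)
          = -(brE n R ε (brE n R ε x y) z + -brE n R ε x (brE n R ε y z)
              + brE n R ε (brE n R ε z x) y) := by abel
        _ = 0 := by rw [h2, neg_zero]
    exact sub_eq_zero.mp h4
  exact ⟨key1, key2,
    ⟨@LieRing.mk (Gl n R) inferInstance ⟨fun u v => brE n R ε u v⟩ hadd hlieadd key1 hleib, rfl,
      fun u v => rfl⟩⟩
end

section
/- Let ψ be the cyclic permutation of {1,…,n} given by ψ(i) = i+1 for i < n and ψ(n) = 1. The R-linear map Ψ : gl_{n+}^ε → gl_{n+}^ε determined on the basis by Ψ(x_{ij}) = x_{ψ(i)ψ(j)}, Ψ(a_i) = a_{ψ(i)}, Ψ(b_i) = b_{ψ(i)} is a Lie algebra automorphism of gl_{n+}^ε. -/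
variable (n : ℕ) (R : Type*) [CommRing R] [Invertible (2 : R)] (ε : R)

/-- `Ψ` for `gl_{n+}^ε`: determined on the basis by incrementing all indices by `1` mod `n`. -/
noncomputable def Psi [NeZero n] : Gl n R →ₗ[R] Gl n R :=
  Finsupp.lift (Gl n R) R (GlIdx n) fun t =>
    match t with
    | Sum.inl ⟨(i, j), _⟩ => xe n R (i + 1) (j + 1)
    | Sum.inr (Sum.inl i) => aE n R (i + 1)
    | Sum.inr (Sum.inr i) => bE n R (i + 1)

/-- The inverse of `Ψ`: decrement all indices by `1` mod `n`. -/
noncomputable def Psi' [NeZero n] : Gl n R →ₗ[R] Gl n R :=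
  Finsupp.lift (Gl n R) R (GlIdx n) fun t =>
    match t with
    | Sum.inl ⟨(i, j), _⟩ => xe n R (i - 1) (j - 1)
    | Sum.inr (Sum.inl i) => aE n R (i - 1)
    | Sum.inr (Sum.inr i) => bE n R (i - 1)

omit [Invertible (2:R)] in
lemma xe_ne (i j : Fin n) (h : i ≠ j) :
    xe n R i j = Finsupp.single (Sum.inl ⟨(i,j),h⟩) (1:R) := by
  simp [xe, xE, h]

omit [Invertible (2:R)] in
lemma Psi_x [NeZero n] (i j : Fin n) (h : i ≠ j) :
    Psi n R (Finsupp.single (Sum.inl ⟨(i,j),h⟩) (1:R)) = xe n R (i+1) (j+1) := by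
  simp [Psi, Finsupp.lift_apply, Finsupp.sum_single_index]

omit [Invertible (2:R)] in
lemma Psi_a [NeZero n] (i : Fin n) : Psi n R (aE n R i) = aE n R (i+1) := by
  simp [Psi, aE, Finsupp.lift_apply, Finsupp.sum_single_index]

omit [Invertible (2:R)] in
lemma Psi_b [NeZero n] (i : Fin n) : Psi n R (bE n R i) = bE n R (i+1) := by
  simp [Psi, bE, Finsupp.lift_apply, Finsupp.sum_single_index]

omit [Invertible (2:R)] in
lemma Psi_xe [NeZero n] (i j : Fin n) : Psi n R (xe n R i j) = xe n R (i+1) (j+1) := by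
  by_cases h : i = j
  · subst h; simp [xe]
  · rw [xe_ne n R i j h, Psi_x]

omit [Invertible (2:R)] in
lemma Psi'_x [NeZero n] (i j : Fin n) (h : i ≠ j) :
    Psi' n R (Finsupp.single (Sum.inl ⟨(i,j),h⟩) (1:R)) = xe n R (i-1) (j-1) := by
  simp [Psi', Finsupp.lift_apply, Finsupp.sum_single_index]

omit [Invertible (2:R)] in
lemma Psi'_xe [NeZero n] (i j : Fin n) : Psi' n R (xe n R i j) = xe n R (i-1) (j-1) := by
  by_cases h : i = j
  · subst h; simp [xe]
  · rw [xe_ne n R i j h, Psi'_x]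

lemma lam_shift [NeZero n] (i j : Fin n) : lam n (i+1) (j+1) = lam n i j := by
  simp [lam, add_sub_add_right_eq_sub]

lemma brE_single_single (s t : GlIdx n) :
    brE n R ε (Finsupp.single s 1) (Finsupp.single t 1) = bbE n R ε s t := by
  simp [brE, Finsupp.lift_apply, Finsupp.sum_single_index]

/-- image of basis element under Psi as a function of the index -/
noncomputable def sft [NeZero n] : GlIdx n → GlIdx n
  | Sum.inl ⟨(i, j), h⟩ => Sum.inl ⟨(i + 1, j + 1), by simpa using h⟩
  | Sum.inr (Sum.inl i) => Sum.inr (Sum.inl (i + 1))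
  | Sum.inr (Sum.inr i) => Sum.inr (Sum.inr (i + 1))

omit [Invertible (2:R)] in
lemma Psi_single [NeZero n] (t : GlIdx n) :
    Psi n R (Finsupp.single t (1:R)) = Finsupp.single (sft n t) (1:R) := by
  match t with
  | Sum.inl ⟨(i, j), h⟩ =>
      rw [Psi_x n R i j h, sft, xe_ne]
  | Sum.inr (Sum.inl i) => rw [show (Finsupp.single (Sum.inr (Sum.inl i)) (1:R)) = aE n R i from rfl, Psi_a]; rfl
  | Sum.inr (Sum.inr i) => rw [show (Finsupp.single (Sum.inr (Sum.inr i)) (1:R)) = bE n R i from rfl, Psi_b]; rfl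

lemma key [NeZero n] (s t : GlIdx n) :
    Psi n R (bbE n R ε s t) = bbE n R ε (sft n s) (sft n t) := by
  match s, t with
  | Sum.inl ⟨(i, j), h⟩, Sum.inl ⟨(k, l), h'⟩ =>
      simp only [bbE, sft, lam_shift, add_left_inj]
      split_ifs with h1 h2 <;>
        simp [map_add, map_sub, map_smul, Psi_a, Psi_b, Psi_xe, apply_ite (Psi n R)]
  | Sum.inl ⟨(j, k), h⟩, Sum.inr (Sum.inl i) =>
      simp only [bbE, sft, add_left_inj]
      simp [map_smul, Psi_xe]
  | Sum.inl ⟨(j, k), h⟩, Sum.inr (Sum.inr i) =>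
      simp only [bbE, sft, add_left_inj]
      simp [map_smul, Psi_xe]
  | Sum.inr (Sum.inl i), Sum.inl ⟨(j, k), h⟩ =>
      simp only [bbE, sft, add_left_inj]
      simp [map_smul, Psi_xe]
  | Sum.inr (Sum.inr i), Sum.inl ⟨(j, k), h⟩ =>
      simp only [bbE, sft, add_left_inj]
      simp [map_smul, Psi_xe]
  | Sum.inr (Sum.inl i), Sum.inr (Sum.inl j) => simp [bbE, sft]
  | Sum.inr (Sum.inl i), Sum.inr (Sum.inr j) => simp [bbE, sft]
  | Sum.inr (Sum.inr i), Sum.inr (Sum.inl j) => simp [bbE, sft]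
  | Sum.inr (Sum.inr i), Sum.inr (Sum.inr j) => simp [bbE, sft]

/-- `Ψ` is a Lie algebra automorphism of `gl_{n+}^ε`. -/
theorem stmt16 (n : ℕ) [NeZero n] (hn : 2 ≤ n) (R : Type*) [CommRing R] [Invertible (2 : R)]
    (ε : R) :
    Function.Bijective (Psi n R) ∧
    ∀ u v : Gl n R, Psi n R (brE n R ε u v) = brE n R ε (Psi n R u) (Psi n R v) := by
  constructor
  · apply Function.bijective_iff_has_inverse.2
    refine ⟨Psi' n R, ?_, ?_⟩
    · intro v
      induction v using Finsupp.induction_linear with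
      | zero => simp
      | add f g hf hg => simp [map_add, hf, hg]
      | single a b =>
          have hb : (Finsupp.single a b : Gl n R) = b • Finsupp.single a (1:R) := by
            simp [Finsupp.smul_single]
          rw [hb, map_smul, map_smul, Psi_single]
          congr 1
          match a with
          | Sum.inl ⟨(i, j), h⟩ =>
              rw [sft, Psi'_x, add_sub_cancel_right, add_sub_cancel_right, xe_ne n R i j h]
          | Sum.inr (Sum.inl i) =>
              rw [sft, show (Finsupp.single (Sum.inr (Sum.inl (i+1))) (1:R)) = aE n R (i+1) from rfl]
              simp [Psi', aE, Finsupp.lift_apply, Finsupp.sum_single_index]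
          | Sum.inr (Sum.inr i) =>
              rw [sft, show (Finsupp.single (Sum.inr (Sum.inr (i+1))) (1:R)) = bE n R (i+1) from rfl]
              simp [Psi', bE, Finsupp.lift_apply, Finsupp.sum_single_index]
    · intro v
      induction v using Finsupp.induction_linear with
      | zero => simp
      | add f g hf hg => simp [map_add, hf, hg]
      | single a b =>
          have hb : (Finsupp.single a b : Gl n R) = b • Finsupp.single a (1:R) := by
            simp [Finsupp.smul_single]
          rw [hb, map_smul, map_smul]
          congr 1
          match a with
          | Sum.inl ⟨(i, j), h⟩ =>
              rw [Psi'_x n R i j h, Psi_xe, sub_add_cancel, sub_add_cancel, xe_ne n R i j h]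
          | Sum.inr (Sum.inl i) =>
              rw [show (Finsupp.single (Sum.inr (Sum.inl i)) (1:R)) = aE n R i from rfl]
              have : Psi' n R (aE n R i) = aE n R (i-1) := by
                simp [Psi', aE, Finsupp.lift_apply, Finsupp.sum_single_index]
              rw [this, Psi_a, sub_add_cancel]
          | Sum.inr (Sum.inr i) =>
              rw [show (Finsupp.single (Sum.inr (Sum.inr i)) (1:R)) = bE n R i from rfl]
              have : Psi' n R (bE n R i) = bE n R (i-1) := by
                simp [Psi', bE, Finsupp.lift_apply, Finsupp.sum_single_index]
              rw [this, Psi_b, sub_add_cancel]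
  · intro u v
    induction u using Finsupp.induction_linear with
    | zero => simp
    | add f g hf hg => simp [map_add, LinearMap.add_apply, hf, hg]
    | single a b =>
        induction v using Finsupp.induction_linear with
        | zero => simp
        | add f g hf hg => simp [map_add, hf, hg]
        | single c d =>
            have hb : (Finsupp.single a b : Gl n R) = b • Finsupp.single a (1:R) := by
              simp [Finsupp.smul_single]
            have hd : (Finsupp.single c d : Gl n R) = d • Finsupp.single c (1:R) := by
              simp [Finsupp.smul_single]
            rw [hb, hd]
            simp only [map_smul, LinearMap.smul_apply, LinearMap.map_smul]
            rw [brE_single_single, Psi_single, Psi_single, brE_single_single, key]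
end
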